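/- For every finite set P of points in the Euclidean plane, every weight function w : P → ℝ with w(p) ≥ 0 for all p, and every integer k ≥ 1, there exist residues r, s ∈ {0,…,k−1} such that the maximum total weight of a conflict-free subset of the points of P that survive the (r,s)-shifting is at least (1 − 1/k)² times the maximum total weight of a conflict-free subset of P. -/

import Mathlib

open scoped Classical

noncomputable section

/-- A set of bidder locations is conflict-free if all pairwise Euclidean
distances are at least 1. -/
def ConflictFree (S : Finset (EuclideanSpace ℝ (Fin 2))) : Prop :=
  ∀ p ∈ S, ∀ q ∈ S, p ≠ q → 1 ≤ dist p q

/-- A point survives the `(r,s)`-shifting with grid parameter `k` if its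
radius-1/2 disk avoids all vertical lines `X ≡ r (mod k)` and all horizontal
lines `Y ≡ s (mod k)`. -/
def Survives (k r s : ℕ) (p : EuclideanSpace ℝ (Fin 2)) : Prop :=
  (∀ c : ℤ, c % (k : ℤ) = (r : ℤ) → (1 / 2 : ℝ) ≤ |p 0 - (c : ℝ)|) ∧
  (∀ c : ℤ, c % (k : ℤ) = (s : ℤ) → (1 / 2 : ℝ) ≤ |p 1 - (c : ℝ)|)

lemma killed_card_le_one (k : ℕ) (x : ℝ) :
    ((Finset.range k).filter
      (fun r : ℕ => ¬ ∀ c : ℤ, c % (k : ℤ) = (r : ℤ) → (1/2 : ℝ) ≤ |x - (c:ℝ)|)).card ≤ 1 := by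
  rw [Finset.card_le_one]
  intro r1 h1 r2 h2
  simp only [Finset.mem_filter, Finset.mem_range, not_forall, not_le] at h1 h2
  obtain ⟨-, c1, hc1, hlt1⟩ := h1
  obtain ⟨-, c2, hc2, hlt2⟩ := h2
  by_cases hcc : c1 = c2
  · have : (r1 : ℤ) = r2 := by rw [← hc1, ← hc2, hcc]
    exact_mod_cast this
  · exfalso
    have h1' : (1:ℝ) ≤ |(c1:ℝ) - (c2:ℝ)| := by
      have := Int.one_le_abs (sub_ne_zero.mpr hcc)
      calc (1:ℝ) ≤ ((|c1 - c2| : ℤ) : ℝ) := by exact_mod_cast this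
        _ = |(c1:ℝ) - c2| := by push_cast; rfl
    have h2' : |(c1:ℝ) - c2| ≤ |(c1:ℝ) - x| + |x - c2| := abs_sub_le _ _ _
    have h3' : |(c1:ℝ) - x| = |x - c1| := abs_sub_comm _ _
    linarith

lemma avg_step {α : Type*} (k : ℕ) (hk : 1 ≤ k) (T : Finset α) (w : α → ℝ)
    (hw : ∀ p ∈ T, 0 ≤ w p) (g : α → ℝ) :
    ∃ r < k, (1 - 1/(k:ℝ)) * ∑ p ∈ T, w p ≤
      ∑ p ∈ T.filter (fun p => ∀ c : ℤ, c % (k:ℤ) = (r:ℤ) → (1/2:ℝ) ≤ |g p - (c:ℝ)|), w p := by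
  have hk0 : (0:ℝ) < (k:ℝ) := by exact_mod_cast hk
  set cond : ℕ → α → Prop :=
    fun r p => ∀ c : ℤ, c % (k:ℤ) = (r:ℤ) → (1/2:ℝ) ≤ |g p - (c:ℝ)| with hcond
  have swap : ∑ r ∈ Finset.range k, ∑ p ∈ T.filter (cond r), w p
      = ∑ p ∈ T, (((Finset.range k).filter (fun r => cond r p)).card : ℝ) * w p := by
    simp_rw [Finset.sum_filter]
    rw [Finset.sum_comm]
    refine Finset.sum_congr rfl fun p _ => ?_
    rw [← Finset.sum_filter, Finset.sum_const, nsmul_eq_mul]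
  have cardbound : ∀ p, ((k:ℝ) - 1) ≤
      (((Finset.range k).filter (fun r => cond r p)).card : ℝ) := by
    intro p
    have h1 := killed_card_le_one k (g p)
    have h2 : ((Finset.range k).filter (fun r => cond r p)).card
        + ((Finset.range k).filter (fun r => ¬ cond r p)).card = k := by
      rw [Finset.card_filter_add_card_filter_not, Finset.card_range]
    have h1' : ((Finset.range k).filter (fun r => ¬ cond r p)).card ≤ 1 := h1
    have : k - 1 ≤ ((Finset.range k).filter (fun r => cond r p)).card := by omega
    have := (Nat.cast_le (α := ℝ)).mpr this
    rw [Nat.cast_sub hk] at this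
    simpa using this
  have hkey : ∑ r ∈ Finset.range k, ((1 - 1/(k:ℝ)) * ∑ p ∈ T, w p) ≤
      ∑ r ∈ Finset.range k, ∑ p ∈ T.filter (cond r), w p := by
    rw [swap, Finset.sum_const, Finset.card_range, nsmul_eq_mul]
    have : (k:ℝ) * ((1 - 1/(k:ℝ)) * ∑ p ∈ T, w p) = ∑ p ∈ T, ((k:ℝ) - 1) * w p := by
      rw [← Finset.mul_sum]
      field_simp
    rw [this]
    refine Finset.sum_le_sum fun p hp => ?_
    exact mul_le_mul_of_nonneg_right (cardbound p) (hw p hp)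
  obtain ⟨r, hr, hle⟩ := Finset.exists_le_of_sum_le
    (Finset.nonempty_range_iff.mpr (by omega)) hkey
  exact ⟨r, Finset.mem_range.mp hr, hle⟩

/-- For some residues `r, s ∈ {0,…,k−1}`, the maximum total weight of a
conflict-free subset of the surviving points of `P` is at least
`(1 − 1/k)²` times the maximum total weight of a conflict-free subset of `P`. -/
theorem shifting_strategy_bound (P : Finset (EuclideanSpace ℝ (Fin 2)))
    (w : EuclideanSpace ℝ (Fin 2) → ℝ) (hw : ∀ p ∈ P, 0 ≤ w p)
    (k : ℕ) (hk : 1 ≤ k) :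
    ∃ r < k, ∃ s < k, ∃ S ⊆ P,
      (∀ p ∈ S, Survives k r s p) ∧ ConflictFree S ∧
      ∀ T ⊆ P, ConflictFree T →
        (1 - 1 / (k : ℝ)) ^ 2 * ∑ p ∈ T, w p ≤ ∑ p ∈ S, w p := by
  have hkpos : (0:ℝ) < (k:ℝ) := by exact_mod_cast hk
  have hfac : (0:ℝ) ≤ 1 - 1/(k:ℝ) := by
    have : 1/(k:ℝ) ≤ 1 := by
      rw [div_le_one hkpos]; exact_mod_cast hk
    linarith
  -- optimal conflict-free subset
  obtain ⟨T₀, hT₀mem, hT₀opt⟩ := Finset.exists_max_image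
    (P.powerset.filter (fun T => ConflictFree T)) (fun T => ∑ p ∈ T, w p)
    ⟨∅, Finset.mem_filter.mpr ⟨Finset.empty_mem_powerset _, by simp [ConflictFree]⟩⟩
  rw [Finset.mem_filter, Finset.mem_powerset] at hT₀mem
  obtain ⟨hT₀P, hT₀cf⟩ := hT₀mem
  have hwT₀ : ∀ p ∈ T₀, 0 ≤ w p := fun p hp => hw p (hT₀P hp)
  obtain ⟨r, hr, h1⟩ := avg_step k hk T₀ w hwT₀ (fun p => p 0)
  set A := T₀.filter (fun p => ∀ c : ℤ, c % (k:ℤ) = (r:ℤ) → (1/2:ℝ) ≤ |p 0 - (c:ℝ)|) with hA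
  have hwA : ∀ p ∈ A, 0 ≤ w p := fun p hp => hwT₀ p (Finset.mem_filter.mp hp).1
  obtain ⟨s, hs, h2⟩ := avg_step k hk A w hwA (fun p => p 1)
  set S := A.filter (fun p => ∀ c : ℤ, c % (k:ℤ) = (s:ℤ) → (1/2:ℝ) ≤ |p 1 - (c:ℝ)|) with hS
  have hSA : S ⊆ A := Finset.filter_subset _ _
  have hAT : A ⊆ T₀ := Finset.filter_subset _ _
  have hSP : S ⊆ P := fun p hp => hT₀P (hAT (hSA hp))
  refine ⟨r, hr, s, hs, S, hSP, ?_, ?_, ?_⟩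
  · intro p hp
    have h1p := (Finset.mem_filter.mp (hSA hp)).2
    have h2p := (Finset.mem_filter.mp hp).2
    exact ⟨h1p, h2p⟩
  · intro p hp q hq hne
    exact hT₀cf p (hAT (hSA hp)) q (hAT (hSA hq)) hne
  · intro T hTP hTcf
    have hTopt : ∑ p ∈ T, w p ≤ ∑ p ∈ T₀, w p := by
      apply hT₀opt
      rw [Finset.mem_filter, Finset.mem_powerset]
      exact ⟨hTP, hTcf⟩
    have : (1 - 1/(k:ℝ))^2 * ∑ p ∈ T, w p ≤ (1 - 1/(k:ℝ))^2 * ∑ p ∈ T₀, w p :=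
      mul_le_mul_of_nonneg_left hTopt (pow_nonneg hfac 2)
    calc (1 - 1/(k:ℝ))^2 * ∑ p ∈ T, w p
        ≤ (1 - 1/(k:ℝ))^2 * ∑ p ∈ T₀, w p := this
      _ = (1 - 1/(k:ℝ)) * ((1 - 1/(k:ℝ)) * ∑ p ∈ T₀, w p) := by ring
      _ ≤ (1 - 1/(k:ℝ)) * ∑ p ∈ A, w p := mul_le_mul_of_nonneg_left h1 hfac
      _ ≤ ∑ p ∈ S, w p := h2
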